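/- arXiv:2203.16725 — 2 statements merged into one kernel-verified Lean document; each statement's English description precedes it below -/
import Mathlib

section
/- For d, N ≥ 1 there exist positive constants σ and C such that: for every polynomial R on ℝ^d of degree at most N satisfying Σ_{|β|≤N} |∂^β R(0)| ≥ 1, and every ε > 0, the Lebesgue measure of {x in the closed unit cube Q ⊂ ℝ^d : |R(x)| ≤ ε} is at most C ε^σ. -/
open MeasureTheory MvPolynomial
open scoped ENNReal

lemma contDiff_eval_mvpoly {d : ℕ} (R : MvPolynomial (Fin d) ℝ) {n : ℕ∞} :
    ContDiff ℝ n (fun x : Fin d → ℝ => eval x R) := by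
  induction R using MvPolynomial.induction_on with
  | C a => simpa using contDiff_const (c := a)
  | add p q hp hq => simpa using hp.add hq
  | mul_X p i hp =>
      have : (fun x : Fin d → ℝ => eval x (p * X i)) =
          (fun x : Fin d → ℝ => eval x p * x i) := by
        funext x; simp
      rw [this]
      exact hp.mul ((ContinuousLinearMap.proj i : (Fin d → ℝ) →L[ℝ] ℝ).contDiff)

section StepA
variable (d N : ℕ)

noncomputable def Mbd : Fin d →₀ ℕ := Finsupp.equivFunOnFinite.symm (fun _ => N)

noncomputable def Sset : Finset (Fin d →₀ ℕ) := Finset.Iic (Mbd d N)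

noncomputable def Psi : ({s // s ∈ Sset d N} → ℝ) →ₗ[ℝ] MvPolynomial (Fin d) ℝ :=
  ∑ s ∈ (Sset d N).attach, (monomial s.1 : ℝ →ₗ[ℝ] MvPolynomial (Fin d) ℝ).comp
    (LinearMap.proj s)

lemma Psi_apply (c : {s // s ∈ Sset d N} → ℝ) :
    Psi d N c = ∑ s ∈ (Sset d N).attach, monomial s.1 (c s) := by
  simp [Psi]

lemma Psi_coeffs (R : MvPolynomial (Fin d) ℝ) (hR : R.totalDegree ≤ N) :
    Psi d N (fun s => R.coeff s.1) = R := by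
  rw [Psi_apply, Finset.sum_attach (Sset d N) (fun s => monomial s (R.coeff s))]
  have hsub : R.support ⊆ Sset d N := by
    intro s hs
    rw [Sset, Finset.mem_Iic]
    intro i
    have h1 : s i ≤ s.sum fun _ e => e := by
      by_cases hi : i ∈ s.support
      · exact Finset.single_le_sum (f := fun j => s j) (fun _ _ => Nat.zero_le _) hi
      · simp [Finsupp.notMem_support_iff.mp hi]
    have h2 : (s.sum fun _ e => e) ≤ N :=
      le_trans (MvPolynomial.le_totalDegree hs) hR
    simpa [Mbd] using le_trans h1 h2
  rw [← Finset.sum_subset hsub (fun s _ hs => by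
    simp [MvPolynomial.notMem_support_iff.mp hs])]
  exact support_sum_monomial_coeff R

noncomputable def Jmap : ({s // s ∈ Sset d N} → ℝ) →ₗ[ℝ]
    (∀ k : Fin (N+1), ContinuousMultilinearMap ℝ (fun _ : Fin (k:ℕ) => (Fin d → ℝ)) ℝ) where
  toFun c := fun k => iteratedFDeriv ℝ (k:ℕ) (fun x : Fin d → ℝ => eval x (Psi d N c)) 0
  map_add' c c' := by
    funext k
    have he : (fun x : Fin d → ℝ => eval x (Psi d N (c + c'))) =
        (fun x => eval x (Psi d N c)) + (fun x => eval x (Psi d N c')) := by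
      funext x; simp [map_add]
    simp only [he, Pi.add_apply]
    exact iteratedFDeriv_add_apply (contDiff_eval_mvpoly _).contDiffAt (contDiff_eval_mvpoly _).contDiffAt
  map_smul' a c := by
    funext k
    have he : (fun x : Fin d → ℝ => eval x (Psi d N (a • c))) =
        a • (fun x => eval x (Psi d N c)) := by
      funext x; simp [_root_.map_smul]
    simp only [he, RingHom.id_apply, Pi.smul_apply]
    exact iteratedFDeriv_const_smul_apply (contDiff_eval_mvpoly _).contDiffAt

set_option maxHeartbeats 2000000 in
set_option synthInstance.maxHeartbeats 1000000 in
lemma jet_coeff :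
    ∃ κ : ℝ, 0 < κ ∧ ∀ R : MvPolynomial (Fin d) ℝ, R.totalDegree ≤ N →
      1 ≤ ∑ k ∈ Finset.range (N + 1),
          ‖iteratedFDeriv ℝ k (fun x : Fin d → ℝ => eval x R) 0‖ →
      ∃ s : Fin d →₀ ℕ, κ ≤ |R.coeff s| := by
  classical
  set J := LinearMap.toContinuousLinearMap (Jmap d N) with hJ
  set K : ℝ := (N+1) * (‖J‖ + 1) with hK
  have hKpos : 0 < K := by positivity
  refine ⟨K⁻¹, by positivity, ?_⟩
  intro R hR hjet
  by_contra hcon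
  push_neg at hcon
  set c : {s // s ∈ Sset d N} → ℝ := fun s => R.coeff s.1 with hc
  have hnorm : ‖c‖ < K⁻¹ := by
    rw [pi_norm_lt_iff (by positivity)]
    intro s
    simpa [Real.norm_eq_abs] using hcon s.1
  have hRc : R = Psi d N c := (Psi_coeffs d N R hR).symm
  have hsum : ∑ k ∈ Finset.range (N + 1),
      ‖iteratedFDeriv ℝ k (fun x : Fin d → ℝ => eval x R) 0‖ ≤ K * ‖c‖ := by
    have hb : ∀ k ∈ Finset.range (N+1),
        ‖iteratedFDeriv ℝ k (fun x : Fin d → ℝ => eval x R) 0‖ ≤ ‖J‖ * ‖c‖ := by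
      intro k hk
      rw [Finset.mem_range] at hk
      have h1 : iteratedFDeriv ℝ k (fun x : Fin d → ℝ => eval x R) 0
          = Jmap d N c ⟨k, hk⟩ := by rw [hRc]; rfl
      rw [h1]
      calc ‖Jmap d N c ⟨k, hk⟩‖ ≤ ‖Jmap d N c‖ := norm_le_pi_norm _ _
        _ = ‖J c‖ := by rw [hJ, LinearMap.coe_toContinuousLinearMap']
        _ ≤ ‖J‖ * ‖c‖ := J.le_opNorm c
    calc ∑ k ∈ Finset.range (N + 1),
        ‖iteratedFDeriv ℝ k (fun x : Fin d → ℝ => eval x R) 0‖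
        ≤ ∑ _k ∈ Finset.range (N+1), ‖J‖ * ‖c‖ := Finset.sum_le_sum hb
      _ = (N+1) * (‖J‖ * ‖c‖) := by simp [Finset.sum_const]
      _ ≤ K * ‖c‖ := by
          rw [hK]
          have : (0:ℝ) ≤ ‖c‖ := norm_nonneg _
          nlinarith [norm_nonneg c, norm_nonneg J]
  have : (1:ℝ) < 1 := by
    calc (1:ℝ) ≤ K * ‖c‖ := le_trans hjet hsum
      _ < K * K⁻¹ := by
          apply mul_lt_mul_of_pos_left hnorm hKpos
      _ = 1 := mul_inv_cancel₀ (ne_of_gt hKpos)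
  exact absurd this (lt_irrefl 1)
end StepA

lemma coeff_prod_bound {ι : Type*} [DecidableEq ι] (t : Finset ι) (a w : ι → ℝ) (B : ℝ)
    (hB : 0 ≤ B) (ha : ∀ j ∈ t, |a j| ≤ B) (hw : ∀ j ∈ t, |w j| ≤ 1) :
    ∀ k, |(∏ j ∈ t, (Polynomial.C (a j) * (Polynomial.X - Polynomial.C (w j)))).coeff k|
      ≤ (2*B) ^ t.card := by
  classical
  induction t using Finset.induction_on with
  | empty =>
      intro k
      cases k <;> simp [Polynomial.coeff_one]
  | @insert j t hj ih =>
      have ha' : ∀ i ∈ t, |a i| ≤ B := fun i hi => ha i (Finset.mem_insert_of_mem hi)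
      have hw' : ∀ i ∈ t, |w i| ≤ 1 := fun i hi => hw i (Finset.mem_insert_of_mem hi)
      have IH := ih ha' hw'
      intro k
      have hP : 0 ≤ (2*B) ^ t.card := by positivity
      set P := ∏ i ∈ t, (Polynomial.C (a i) * (Polynomial.X - Polynomial.C (w i))) with hPdef
      have hXP : |(Polynomial.X * P).coeff k| ≤ (2*B) ^ t.card := by
        cases k with
        | zero => simp [Polynomial.mul_coeff_zero, hP]
        | succ n => rw [Polynomial.coeff_X_mul]; exact IH n
      have hsplit : ∏ i ∈ insert j t, (Polynomial.C (a i) * (Polynomial.X - Polynomial.C (w i)))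
          = Polynomial.C (a j) * (Polynomial.X * P - Polynomial.C (w j) * P) := by
        rw [Finset.prod_insert hj, ← hPdef]; ring
      rw [hsplit, Finset.card_insert_of_notMem hj]
      rw [Polynomial.coeff_C_mul, Polynomial.coeff_sub, Polynomial.coeff_C_mul]
      have h1 : |(Polynomial.X * P).coeff k - w j * P.coeff k|
          ≤ (2*B) ^ t.card + (2*B) ^ t.card := by
        refine (abs_sub _ _).trans (add_le_add hXP ?_)
        rw [abs_mul]
        calc |w j| * |P.coeff k| ≤ 1 * (2*B)^t.card := by
              apply mul_le_mul (hw j (Finset.mem_insert_self j t)) (IH k) (abs_nonneg _) zero_le_one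
          _ = (2*B)^t.card := one_mul _
      rw [abs_mul]
      calc |a j| * |(Polynomial.X * P).coeff k - w j * P.coeff k|
          ≤ B * ((2*B) ^ t.card + (2*B) ^ t.card) :=
            mul_le_mul (ha j (Finset.mem_insert_self j t)) h1 (abs_nonneg _) hB
        _ = (2*B) ^ (t.card + 1) := by ring

lemma exists_nodes (N : ℕ) {A : Set ℝ} (hA : IsClosed A) (hsub : A ⊆ Set.Icc 0 1)
    (hm : 0 < (volume A).toReal) :
    ∃ τ : Fin (N+1) → ℝ, (∀ i, τ i ∈ A) ∧
      ∀ i j : Fin (N+1), i < j →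
        τ i + (volume A).toReal / (N+1) ≤ τ j := by
  set m : ℝ := (volume A).toReal with hmdef
  set γ : ℝ := m / (N+1) with hγdef
  have hγpos : 0 < γ := by positivity
  have hAfin : volume A ≠ ⊤ := by
    refine ne_top_of_le_ne_top ?_ (measure_mono hsub)
    simp [Real.volume_Icc]
  set G : ℝ → ℝ≥0∞ := fun u => volume (A ∩ Set.Icc 0 u) with hGdef
  have hGfin : ∀ u, G u ≠ ⊤ :=
    fun u => ne_top_of_le_ne_top hAfin (measure_mono Set.inter_subset_left)
  set g : ℝ → ℝ := fun u => (G u).toReal with hgdef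
  have hGmono : Monotone G := fun u v huv =>
    measure_mono (Set.inter_subset_inter_right _ (Set.Icc_subset_Icc_right huv))
  have hgmono : Monotone g := fun u v huv => ENNReal.toReal_mono (hGfin v) (hGmono huv)
  have hgadd : ∀ u v : ℝ, u ≤ v → g v ≤ g u + (v - u) := by
    intro u v huv
    have hsub2 : A ∩ Set.Icc 0 v ⊆ (A ∩ Set.Icc 0 u) ∪ Set.Ioc u v := by
      rintro t ⟨htA, ht0, htv⟩
      rcases le_or_gt t u with h | h
      · exact Or.inl ⟨htA, ht0, h⟩
      · exact Or.inr ⟨h, htv⟩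
    have := (measure_mono hsub2).trans (measure_union_le (μ := volume) _ _)
    rw [Real.volume_Ioc] at this
    calc g v ≤ (G u + ENNReal.ofReal (v - u)).toReal := by
          apply ENNReal.toReal_mono _ this
          exact ENNReal.add_ne_top.2 ⟨hGfin u, ENNReal.ofReal_ne_top⟩
      _ = g u + (v - u) := by
          rw [ENNReal.toReal_add (hGfin u) ENNReal.ofReal_ne_top,
            ENNReal.toReal_ofReal (sub_nonneg.2 huv)]
  have hg0 : g 0 = 0 := by
    have : G 0 ≤ volume {(0:ℝ)} := by
      apply measure_mono
      intro t ⟨_, ht⟩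
      simp only [Set.Icc_self] at ht
      exact ht
    simp only [Real.volume_singleton, nonpos_iff_eq_zero] at this
    simp [hgdef, this]
  have hg1 : g 1 = m := by
    have : A ∩ Set.Icc 0 1 = A := Set.inter_eq_self_of_subset_left hsub
    simp [hgdef, hGdef, this, hmdef]
  have hgcont : Continuous g := by
    apply LipschitzWith.continuous (K := 1)
    apply LipschitzWith.of_dist_le_mul
    intro u v
    simp only [Real.dist_eq, NNReal.coe_one, one_mul]
    rcases le_total u v with h | h
    · rw [abs_sub_comm, abs_of_nonneg (sub_nonneg.2 (hgmono h)), abs_of_nonpos (sub_nonpos.2 h)]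
      linarith [hgadd u v h]
    · rw [abs_of_nonneg (sub_nonneg.2 (hgmono h)), abs_of_nonneg (sub_nonneg.2 h)]
      linarith [hgadd v u h]
  set θ : ℕ → ℝ := fun i => (i+1) * γ with hθdef
  have hθpos : ∀ i, 0 < θ i := fun i => by positivity
  have hθle : ∀ i : ℕ, i ≤ N → θ i ≤ m := by
    intro i hi
    have hcast : (i:ℝ) ≤ N := Nat.cast_le.2 hi
    have : ((i:ℝ)+1) ≤ (N+1) := by linarith
    calc θ i = (i+1) * γ := rfl
      _ ≤ (N+1) * γ := by nlinarith
      _ = m := by rw [hγdef]; field_simp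
  set T : ℕ → Set ℝ := fun i => Set.Icc 0 1 ∩ g ⁻¹' (Set.Ici (θ i)) with hTdef
  have hTcl : ∀ i, IsClosed (T i) := fun i =>
    isClosed_Icc.inter (isClosed_Ici.preimage hgcont)
  have hTne : ∀ i : ℕ, i ≤ N → (T i).Nonempty := by
    intro i hi
    exact ⟨1, ⟨zero_le_one, le_refl 1⟩, by simpa [hg1] using hθle i hi⟩
  have hTbdd : ∀ i, BddBelow (T i) := fun i =>
    BddBelow.mono Set.inter_subset_left (bddBelow_Icc)
  set τ : ℕ → ℝ := fun i => sInf (T i) with hτdef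
  have hτmem : ∀ i : ℕ, i ≤ N → τ i ∈ T i := fun i hi =>
    (hTcl i).csInf_mem (hTne i hi) (hTbdd i)
  have h2 : ∀ i : ℕ, ∀ u ∈ Set.Icc (0:ℝ) 1, u < τ i → g u < θ i := by
    intro i u hu hlt
    by_contra hcon
    push_neg at hcon
    exact absurd (csInf_le (hTbdd i) ⟨hu, hcon⟩) (not_le.2 hlt)
  have h3 : ∀ i : ℕ, i ≤ N → 0 < τ i := by
    intro i hi
    rcases (hτmem i hi) with ⟨⟨h0, _⟩, hg⟩
    rcases lt_or_eq_of_le h0 with h | h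
    · exact h
    · exfalso
      rw [← h, Set.mem_preimage, Set.mem_Ici] at hg
      rw [hg0] at hg
      exact absurd hg (not_le.2 (hθpos i))
  have h4 : ∀ i : ℕ, i ≤ N → g (τ i) ≤ θ i := by
    intro i hi
    by_contra hcon
    push_neg at hcon
    set δ := g (τ i) - θ i with hδdef
    have hδpos : 0 < δ := by linarith
    set u := max 0 (τ i - δ) with hudef
    have hτI : τ i ∈ Set.Icc (0:ℝ) 1 := (hτmem i hi).1
    have huI : u ∈ Set.Icc (0:ℝ) 1 := ⟨le_max_left _ _, max_le (by linarith [hτI.2]) (by linarith [hτI.2])⟩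
    have hult : u < τ i := max_lt (h3 i hi) (by linarith)
    have hgap : τ i - u ≤ δ := by
      have : τ i - δ ≤ u := le_max_right _ _
      linarith
    have := hgadd u (τ i) (le_of_lt hult)
    have : θ i ≤ g u := by linarith
    exact absurd this (not_le.2 (h2 i u huI hult))
  have h5 : ∀ i : ℕ, i ≤ N → τ i ∈ A := by
    intro i hi
    by_contra hna
    obtain ⟨η, hηpos, hball⟩ := Metric.isOpen_iff.1 hA.isOpen_compl (τ i) hna
    set u := max 0 (τ i - η/2) with hudef
    have hτI : τ i ∈ Set.Icc (0:ℝ) 1 := (hτmem i hi).1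
    have huI : u ∈ Set.Icc (0:ℝ) 1 :=
      ⟨le_max_left _ _, max_le (by linarith [hτI.2]) (by linarith [hτI.2])⟩
    have hult : u < τ i := max_lt (h3 i hi) (by linarith)
    have hsub3 : A ∩ Set.Icc 0 (τ i) ⊆ A ∩ Set.Icc 0 u := by
      rintro t ⟨htA, ht0, htτ⟩
      refine ⟨htA, ht0, ?_⟩
      by_contra hcon
      push_neg at hcon
      have hd : dist t (τ i) < η := by
        rw [Real.dist_eq, abs_of_nonpos (by linarith)]
        have : τ i - η/2 ≤ u := le_max_right _ _
        linarith
      exact absurd htA (hball hd)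
    have hgle : g (τ i) ≤ g u := ENNReal.toReal_mono (hGfin u) (measure_mono hsub3)
    have : u ∈ T i := ⟨huI, le_trans (hτmem i hi).2 hgle⟩
    exact absurd (csInf_le (hTbdd i) this) (not_le.2 hult)
  have h6 : ∀ i j : ℕ, i ≤ j → j ≤ N → τ i ≤ τ j := by
    intro i j hij hj
    apply csInf_le_csInf (hTbdd i) (hTne j hj)
    rintro u ⟨hu1, hu2⟩
    rw [Set.mem_preimage, Set.mem_Ici] at hu2
    refine ⟨hu1, Set.mem_preimage.2 (Set.mem_Ici.2 (le_trans ?_ hu2))⟩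
    have : (i:ℝ) ≤ j := Nat.cast_le.2 hij
    simp only [hθdef]
    nlinarith
  have h7 : ∀ i : ℕ, i < N → τ i + γ ≤ τ (i+1) := by
    intro i hi
    have hmono := h6 i (i+1) (Nat.le_succ i) hi
    have h1 := (hτmem (i+1) hi).2
    rw [Set.mem_preimage, Set.mem_Ici] at h1
    have h2' := h4 i (le_of_lt hi)
    have h3' := hgadd (τ i) (τ (i+1)) hmono
    have hθstep : θ (i+1) = θ i + γ := by simp only [hθdef]; push_cast; ring
    linarith
  refine ⟨fun i => τ i, fun i => h5 i (Nat.lt_succ_iff.1 i.isLt), ?_⟩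
  intro i j hij
  have hj : (j:ℕ) ≤ N := Nat.lt_succ_iff.1 j.isLt
  have hij' : (i:ℕ) < (j:ℕ) := hij
  calc τ i + γ ≤ τ ((i:ℕ)+1) := h7 i (lt_of_lt_of_le hij' hj)
    _ ≤ τ j := h6 ((i:ℕ)+1) j hij' hj

set_option maxHeartbeats 2000000 in
lemma oneD (N : ℕ) (hN : 1 ≤ N) :
    ∃ C : ℝ, 1 ≤ C ∧ ∀ p : Polynomial ℝ, p.natDegree ≤ N → ∀ κ : ℝ, 0 < κ →
      (∃ k, κ ≤ |p.coeff k|) → ∀ ε : ℝ, 0 < ε →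
      volume {t : ℝ | t ∈ Set.Icc (0:ℝ) 1 ∧ |Polynomial.eval t p| ≤ ε} ≤
        ENNReal.ofReal (C * (ε/κ) ^ (1/(N:ℝ))) := by
  classical
  set C : ℝ := ((N:ℝ)+1)^2 * 2^N with hC
  have hNpos : (0:ℝ) < N := by exact_mod_cast hN
  have hC1 : 1 ≤ C := by
    have h1 : (1:ℝ) ≤ ((N:ℝ)+1)^2 := one_le_pow₀ (by linarith)
    have h2 : (1:ℝ) ≤ 2^N := one_le_pow₀ one_le_two
    nlinarith
  refine ⟨C, hC1, ?_⟩
  rintro p hdeg κ hκ ⟨k₀, hk₀⟩ ε hε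
  set A := {t : ℝ | t ∈ Set.Icc (0:ℝ) 1 ∧ |Polynomial.eval t p| ≤ ε} with hAdef
  have hAeq : A = Set.Icc (0:ℝ) 1 ∩ (fun t => |Polynomial.eval t p|) ⁻¹' (Set.Iic ε) := by
    ext t; simp [hAdef, and_comm]
  have hAcl : IsClosed A := by
    rw [hAeq]
    exact isClosed_Icc.inter (isClosed_Iic.preimage (Polynomial.continuous p).abs)
  have hsubA : A ⊆ Set.Icc 0 1 := fun t ht => ht.1
  have hAfin : volume A ≠ ⊤ := by
    refine ne_top_of_le_ne_top ?_ (measure_mono hsubA)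
    simp [Real.volume_Icc]
  rcases eq_or_ne (volume A) 0 with hz | hz
  · rw [hz]; exact zero_le
  set m : ℝ := (volume A).toReal with hmdef
  have hmpos : 0 < m := ENNReal.toReal_pos hz hAfin
  set γ : ℝ := m / (N+1) with hγdef
  have hγpos : 0 < γ := by positivity
  obtain ⟨τ, hτA, hτgap⟩ := exists_nodes N hAcl hsubA hmpos
  have hτmono : StrictMono τ := by
    intro i j hij
    have := hτgap i j hij
    rw [← hγdef] at this
    linarith
  have hgap' : ∀ i j : Fin (N+1), i ≠ j → γ ≤ |τ i - τ j| := by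
    intro i j hij
    rcases hij.lt_or_gt with h | h
    · have := hτgap i j h; rw [← hγdef] at this
      rw [abs_of_nonpos (by linarith)]; linarith
    · have := hτgap j i h; rw [← hγdef] at this
      rw [abs_of_nonneg (by linarith)]; linarith
  have hinj : Set.InjOn τ (Finset.univ : Finset (Fin (N+1))) :=
    fun i _ j _ h => hτmono.injective h
  have hdeglt : p.degree < (Finset.univ : Finset (Fin (N+1))).card := by
    rw [Finset.card_univ, Fintype.card_fin]
    refine lt_of_le_of_lt Polynomial.degree_le_natDegree ?_
    exact_mod_cast Nat.lt_succ_of_le hdeg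
  have hp := Lagrange.eq_interpolate hinj hdeglt
  -- coefficient bound for the Lagrange basis polynomials
  have hbasis : ∀ i : Fin (N+1), ∀ k,
      |(Lagrange.basis Finset.univ τ i).coeff k| ≤ (2 * γ⁻¹)^N := by
    intro i k
    have hform : Lagrange.basis Finset.univ τ i
        = ∏ j ∈ Finset.univ.erase i,
            (Polynomial.C ((τ i - τ j)⁻¹) * (Polynomial.X - Polynomial.C (τ j))) := by
      rw [Lagrange.basis]
      exact Finset.prod_congr rfl (fun j _ => rfl)
    have hcard : (Finset.univ.erase i).card = N := by
      rw [Finset.card_erase_of_mem (Finset.mem_univ i), Finset.card_univ, Fintype.card_fin]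
      omega
    rw [hform]
    have hb := coeff_prod_bound (Finset.univ.erase i) (fun j => (τ i - τ j)⁻¹) τ γ⁻¹
      (le_of_lt (inv_pos.2 hγpos))
      (fun j hj => by
        have hne : i ≠ j := (Finset.ne_of_mem_erase hj).symm
        rw [abs_inv]
        exact inv_anti₀ hγpos (hgap' i j hne))
      (fun j _ => by
        have := hsubA (hτA j)
        rw [abs_le]
        exact ⟨by linarith [this.1], this.2⟩) k
    rwa [hcard] at hb
  have hcoeff : κ ≤ ((N:ℝ)+1) * ε * (2 * γ⁻¹)^N := by
    have heval : ∀ i : Fin (N+1), |Polynomial.eval (τ i) p| ≤ ε := fun i => (hτA i).2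
    calc κ ≤ |p.coeff k₀| := hk₀
      _ = |(Lagrange.interpolate Finset.univ τ (fun i => Polynomial.eval (τ i) p)).coeff k₀| := by
          rw [← hp]
      _ ≤ ∑ i : Fin (N+1), |Polynomial.eval (τ i) p| * |(Lagrange.basis Finset.univ τ i).coeff k₀| := by
          rw [Lagrange.interpolate_apply, Polynomial.finset_sum_coeff]
          refine (Finset.abs_sum_le_sum_abs _ _).trans ?_
          apply Finset.sum_le_sum
          intro i _
          rw [Polynomial.coeff_C_mul, abs_mul]
      _ ≤ ∑ _i : Fin (N+1), ε * (2 * γ⁻¹)^N := by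
          apply Finset.sum_le_sum
          intro i _
          exact mul_le_mul (heval i) (hbasis i k₀) (abs_nonneg _) (le_of_lt hε)
      _ = ((N:ℝ)+1) * ε * (2 * γ⁻¹)^N := by
          rw [Finset.sum_const, Finset.card_univ, Fintype.card_fin]
          push_cast; ring
  -- algebra: m ≤ C * (ε/κ)^(1/N)
  have hkey : m ≤ C * (ε/κ) ^ (1/(N:ℝ)) := by
    have hγN : γ^N ≤ ((N:ℝ)+1) * 2^N * (ε/κ) := by
      have h2 : κ * γ^N ≤ ((N:ℝ)+1) * ε * 2^N := by
        have hγNpos : 0 < γ^N := pow_pos hγpos N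
        have := mul_le_mul_of_nonneg_right hcoeff (le_of_lt hγNpos)
        calc κ * γ^N ≤ ((N:ℝ)+1) * ε * (2 * γ⁻¹)^N * γ^N := this
          _ = ((N:ℝ)+1) * ε * 2^N * (γ⁻¹ * γ)^N := by rw [mul_pow, mul_pow]; ring
          _ = ((N:ℝ)+1) * ε * 2^N := by
              rw [inv_mul_cancel₀ (ne_of_gt hγpos), one_pow, mul_one]
      have h3 : ((N:ℝ)+1) * 2^N * (ε/κ) = (((N:ℝ)+1) * 2^N * ε)/κ := by ring
      rw [h3, le_div_iff₀ hκ]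
      calc γ^N * κ = κ * γ^N := by ring
        _ ≤ ((N:ℝ)+1) * ε * 2^N := h2
        _ = ((N:ℝ)+1) * 2^N * ε := by ring
    set D : ℝ := ((N:ℝ)+1) * 2^N with hD
    have hD1 : 1 ≤ D := by
      have h2 : (1:ℝ) ≤ 2^N := one_le_pow₀ one_le_two
      nlinarith
    have hγle : γ ≤ D * (ε/κ) ^ (1/(N:ℝ)) := by
      have hNne : (N:ℝ) ≠ 0 := ne_of_gt hNpos
      have e1 : γ = (γ^N) ^ (1/(N:ℝ)) := by
        rw [← Real.rpow_natCast γ N, ← Real.rpow_mul (le_of_lt hγpos),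
          mul_one_div, div_self hNne, Real.rpow_one]
      rw [e1]
      calc (γ^N) ^ (1/(N:ℝ)) ≤ (D * (ε/κ)) ^ (1/(N:ℝ)) := by
            apply Real.rpow_le_rpow (le_of_lt (pow_pos hγpos N)) hγN (by positivity)
        _ = D ^ (1/(N:ℝ)) * (ε/κ) ^ (1/(N:ℝ)) := by
            rw [Real.mul_rpow (by linarith) (by positivity)]
        _ ≤ D * (ε/κ) ^ (1/(N:ℝ)) := by
            apply mul_le_mul_of_nonneg_right _ (by positivity)
            calc D ^ (1/(N:ℝ)) ≤ D ^ (1:ℝ) := by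
                  apply Real.rpow_le_rpow_of_exponent_le hD1
                  rw [div_le_one hNpos]
                  exact_mod_cast hN
              _ = D := Real.rpow_one D
    calc m = (N+1) * γ := by rw [hγdef]; field_simp
      _ ≤ (N+1) * (D * (ε/κ) ^ (1/(N:ℝ))) := by
          apply mul_le_mul_of_nonneg_left hγle (by positivity)
      _ = C * (ε/κ) ^ (1/(N:ℝ)) := by rw [hC, hD]; ring
  calc volume A = ENNReal.ofReal m := (ENNReal.ofReal_toReal hAfin).symm
    _ ≤ ENNReal.ofReal (C * (ε/κ) ^ (1/(N:ℝ))) := ENNReal.ofReal_le_ofReal hkey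

lemma cons_mem_Icc {d : ℕ} (t : ℝ) (y : Fin d → ℝ) :
    (Fin.cons t y ∈ Set.Icc (0 : Fin (d+1) → ℝ) 1) ↔
      (t ∈ Set.Icc (0:ℝ) 1 ∧ y ∈ Set.Icc (0 : Fin d → ℝ) 1) := by
  simp only [Set.mem_Icc, Pi.le_def, Fin.forall_fin_succ, Fin.cons_zero, Fin.cons_succ,
    Pi.zero_apply, Pi.one_apply]
  tauto

open MvPolynomial in
set_option maxHeartbeats 2000000 in
lemma mvMain (N : ℕ) (hN : 1 ≤ N) : ∀ d : ℕ,
    ∃ σ : ℝ, 0 < σ ∧ ∃ C : ℝ, 1 ≤ C ∧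
      ∀ R : MvPolynomial (Fin d) ℝ, R.totalDegree ≤ N →
        ∀ κ : ℝ, 0 < κ → (∃ s, κ ≤ |R.coeff s|) →
        ∀ ε : ℝ, 0 < ε →
          volume {x : Fin d → ℝ | x ∈ Set.Icc 0 1 ∧ |MvPolynomial.eval x R| ≤ ε}
            ≤ ENNReal.ofReal (C * (ε/κ) ^ σ) := by
  have hNR : (0:ℝ) < N := by exact_mod_cast hN
  intro d
  induction d with
  | zero =>
      refine ⟨1, one_pos, 1, le_refl 1, ?_⟩
      rintro R _ κ hκ ⟨s, hs⟩ ε hε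
      have hs0 : s = 0 := Finsupp.ext (fun i => i.elim0)
      rw [hs0] at hs
      have heval : ∀ x : Fin 0 → ℝ, eval x R = R.coeff 0 := by
        intro x
        rw [eval_eq]
        have hsub : R.support ⊆ {0} :=
          fun u _ => Finset.mem_singleton.2 (Finsupp.ext (fun i => i.elim0))
        rw [Finset.sum_subset hsub]
        · simp
        · intro u _ hu2
          rw [MvPolynomial.notMem_support_iff.mp hu2, zero_mul]
      rcases le_or_gt κ ε with h | h
      · have h1 : volume {x : Fin 0 → ℝ | x ∈ Set.Icc 0 1 ∧ |eval x R| ≤ ε}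
            ≤ volume (Set.univ : Set (Fin 0 → ℝ)) := measure_mono (Set.subset_univ _)
        have h2 : volume (Set.univ : Set (Fin 0 → ℝ)) = 1 := by
          rw [← Set.pi_univ Set.univ, MeasureTheory.volume_pi_pi]
          simp
        rw [h2] at h1
        refine le_trans h1 ?_
        rw [show (1:ℝ≥0∞) = ENNReal.ofReal 1 by simp]
        apply ENNReal.ofReal_le_ofReal
        rw [one_mul]
        exact Real.one_le_rpow (by rw [le_div_iff₀ hκ]; linarith) zero_le_one
      · have hemp : {x : Fin 0 → ℝ | x ∈ Set.Icc 0 1 ∧ |eval x R| ≤ ε} = ∅ := by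
          ext x
          simp only [Set.mem_setOf_eq, Set.mem_empty_iff_false, iff_false, not_and]
          intro _
          rw [heval x]
          intro hcon
          linarith [hs.trans hcon]
        rw [hemp, measure_empty]
        exact zero_le
  | succ d IH =>
      obtain ⟨σd, hσd, Cd, hCd, IHb⟩ := IH
      obtain ⟨C1, hC11, H1⟩ := oneD N hN
      have hσpos : 0 < min (σd/2) (1/(2*(N:ℝ))) := by positivity
      refine ⟨min (σd/2) (1/(2*(N:ℝ))), hσpos, Cd + C1 + 1, by linarith, ?_⟩
      set σ := min (σd/2) (1/(2*(N:ℝ))) with hσdef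
      rintro R hdeg κ hκ ⟨s, hs⟩ ε hε
      set r := ε/κ with hr
      have hrpos : 0 < r := by positivity
      set S := {x : Fin (d+1) → ℝ | x ∈ Set.Icc 0 1 ∧ |eval x R| ≤ ε} with hS
      have hIccvol : volume (Set.Icc (0 : Fin (d+1) → ℝ) 1) = 1 := by
        rw [Real.volume_Icc_pi]; simp
      have hCpos : (0:ℝ) < Cd + C1 + 1 := by linarith
      rcases le_or_gt r 1 with hr1 | hr1
      swap
      · have h1 : volume S ≤ 1 := by
          rw [← hIccvol]; exact measure_mono (fun x hx => hx.1)
        refine le_trans h1 ?_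
        rw [show (1:ℝ≥0∞) = ENNReal.ofReal 1 by simp]
        apply ENNReal.ofReal_le_ofReal
        have h2 : (1:ℝ) ≤ r ^ σ := Real.one_le_rpow (le_of_lt hr1) (le_of_lt hσpos)
        nlinarith
      -- main case
      set q := MvPolynomial.finSuccEquiv ℝ d R with hq
      set j₀ := s 0 with hj0
      set Rj : MvPolynomial (Fin d) ℝ := q.coeff j₀ with hRj
      have hcoeffRj : κ ≤ |Rj.coeff (Finsupp.tail s)| := by
        rw [hRj, hq, MvPolynomial.finSuccEquiv_coeff_coeff, Finsupp.cons_tail]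
        exact hs
      have hRjdeg : Rj.totalDegree ≤ N := by
        by_cases h0 : Rj = 0
        · rw [h0]; simp
        · have h1 := MvPolynomial.totalDegree_coeff_finSuccEquiv_add_le R j₀ (by rw [← hq, ← hRj]; exact h0)
          rw [← hq, ← hRj] at h1
          omega
      set δ := κ * r ^ ((1:ℝ)/2) with hδ
      have hrhpos : 0 < r ^ ((1:ℝ)/2) := Real.rpow_pos_of_pos hrpos _
      have hδpos : 0 < δ := by positivity
      have hG := IHb Rj hRjdeg κ hκ ⟨Finsupp.tail s, hcoeffRj⟩ δ hδpos
      have hδκ : δ / κ = r ^ ((1:ℝ)/2) := by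
        rw [hδ]; field_simp
      rw [hδκ, ← Real.rpow_mul (le_of_lt hrpos)] at hG
      have hεδ : ε / δ = r ^ ((1:ℝ)/2) := by
        have hhalf : r ^ ((1:ℝ)/2) * r ^ ((1:ℝ)/2) = r := by
          rw [← Real.rpow_add hrpos]
          norm_num
        rw [hδ, div_mul_eq_div_div, ← hr, div_eq_iff (ne_of_gt hrhpos), hhalf]
      have hScl : IsClosed S := by
        have : S = Set.Icc (0 : Fin (d+1) → ℝ) 1 ∩
            (fun x => |eval x R|) ⁻¹' (Set.Iic ε) := by
          ext x; simp [hS, and_comm]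
        rw [this]
        exact isClosed_Icc.inter (isClosed_Iic.preimage
          ((contDiff_eval_mvpoly R (n := 0)).continuous.abs))
      -- transfer to the product space
      set e := MeasurableEquiv.piFinSuccAbove (fun _ : Fin (d+1) => ℝ) 0 with he
      have hmp := (volume_preserving_piFinSuccAbove (fun _ : Fin (d+1) => ℝ) 0).symm
      have hvol : volume (e.symm ⁻¹' S) = volume S :=
        hmp.measure_preimage hScl.measurableSet.nullMeasurableSet
      have hesymm : ∀ z : ℝ × (Fin d → ℝ), e.symm z = Fin.cons z.1 z.2 := by
        intro z
        show (Fin.insertNthEquiv (fun _ => ℝ) 0) z = Fin.cons z.1 z.2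
        rw [Fin.insertNthEquiv_zero]
        rfl
      set B : ℝ≥0∞ := ENNReal.ofReal (C1 * r ^ (1/(2*(N:ℝ)))) with hB
      set py : (Fin d → ℝ) → Polynomial ℝ := fun y => Polynomial.map (eval y) q with hpy
      have hsetfib : ∀ y : Fin d → ℝ, {t : ℝ | (t, y) ∈ e.symm ⁻¹' S} =
          {t : ℝ | (t ∈ Set.Icc (0:ℝ) 1 ∧ y ∈ Set.Icc 0 1) ∧ |Polynomial.eval t (py y)| ≤ ε} := by
        intro y
        ext t
        simp only [Set.mem_preimage, Set.mem_setOf_eq, hesymm (t, y), hS]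
        rw [cons_mem_Icc]
        constructor
        · rintro ⟨h1, h2⟩
          refine ⟨h1, ?_⟩
          rwa [MvPolynomial.eval_eq_eval_mv_eval', ← hq] at h2
        · rintro ⟨h1, h2⟩
          refine ⟨h1, ?_⟩
          rwa [MvPolynomial.eval_eq_eval_mv_eval', ← hq]
      have hfiber : ∀ y : Fin d → ℝ,
          volume {t : ℝ | (t, y) ∈ e.symm ⁻¹' S} ≤
            (Set.Icc (0 : Fin d → ℝ) 1).indicator
              (fun y' => if |eval y' Rj| ≤ δ then (1:ℝ≥0∞) else B) y := by
        intro y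
        by_cases hy : y ∈ Set.Icc (0 : Fin d → ℝ) 1
        · rw [Set.indicator_of_mem hy]
          by_cases hsmall : |eval y Rj| ≤ δ
          · rw [if_pos hsmall, hsetfib y]
            calc volume {t : ℝ | (t ∈ Set.Icc (0:ℝ) 1 ∧ y ∈ Set.Icc 0 1) ∧ |Polynomial.eval t (py y)| ≤ ε}
                ≤ volume (Set.Icc (0:ℝ) 1) := measure_mono (fun t ht => ht.1.1)
              _ = 1 := by simp [Real.volume_Icc]
          · rw [if_neg hsmall]
            push_neg at hsmall
            have hdegmap : (py y).natDegree ≤ N := by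
              refine le_trans Polynomial.natDegree_map_le ?_
              rw [hq, MvPolynomial.natDegree_finSuccEquiv]
              exact le_trans (MvPolynomial.degreeOf_le_totalDegree R 0) hdeg
            have hcoeffmap : δ ≤ |(py y).coeff j₀| := by
              rw [hpy]
              simp only [Polynomial.coeff_map]
              exact le_of_lt hsmall
            have hb := H1 (py y) hdegmap δ hδpos ⟨j₀, hcoeffmap⟩ ε hε
            rw [hsetfib y]
            refine le_trans (measure_mono ?_) (le_trans hb ?_)
            · intro t ht
              exact ⟨ht.1.1, ht.2⟩
            rw [hB]
            apply ENNReal.ofReal_le_ofReal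
            have heq : (1:ℝ)/2 * (1/(N:ℝ)) = 1/(2*(N:ℝ)) := by
              field_simp
            rw [hεδ, ← Real.rpow_mul (le_of_lt hrpos), heq]
        · rw [Set.indicator_of_notMem hy]
          have : {t : ℝ | (t, y) ∈ e.symm ⁻¹' S} = ∅ := by
            rw [hsetfib y]
            ext t
            simp only [Set.mem_setOf_eq, Set.mem_empty_iff_false, iff_false, not_and]
            rintro ⟨_, hy'⟩
            exact absurd hy' hy
          rw [this, measure_empty]
      -- assemble
      set Gset := {y : Fin d → ℝ | y ∈ Set.Icc 0 1 ∧ |eval y Rj| ≤ δ} with hGsetdef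
      have hGmeas : MeasurableSet Gset := by
        have : Gset = Set.Icc (0 : Fin d → ℝ) 1 ∩
            (fun y => |eval y Rj|) ⁻¹' (Set.Iic δ) := by
          ext y; simp [hGsetdef, and_comm]
        rw [this]
        exact (isClosed_Icc.inter (isClosed_Iic.preimage
          ((contDiff_eval_mvpoly Rj (n := 0)).continuous.abs))).measurableSet
      have hIccmeas : MeasurableSet (Set.Icc (0 : Fin d → ℝ) 1) := measurableSet_Icc
      have hmeasT : MeasurableSet (e.symm ⁻¹' S) := e.symm.measurable hScl.measurableSet
      have hIccdvol : volume (Set.Icc (0 : Fin d → ℝ) 1) = 1 := by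
        rw [Real.volume_Icc_pi]; simp
      have hsplit : ∀ y : Fin d → ℝ,
          (Set.Icc (0 : Fin d → ℝ) 1).indicator
              (fun y' => if |eval y' Rj| ≤ δ then (1:ℝ≥0∞) else B) y ≤
            Gset.indicator (fun _ => (1:ℝ≥0∞)) y
              + (Set.Icc (0 : Fin d → ℝ) 1).indicator (fun _ => B) y := by
        intro y
        by_cases hy : y ∈ Set.Icc (0 : Fin d → ℝ) 1
        · rw [Set.indicator_of_mem hy, Set.indicator_of_mem hy]
          by_cases hsmall : |eval y Rj| ≤ δ
          · rw [if_pos hsmall, Set.indicator_of_mem (show y ∈ Gset from ⟨hy, hsmall⟩)]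
            exact le_add_right (le_refl _)
          · rw [if_neg hsmall,
              Set.indicator_of_notMem (fun hyG => hsmall (hyG.2 : |eval y Rj| ≤ δ)), zero_add]
        · rw [Set.indicator_of_notMem hy, Set.indicator_of_notMem hy]
          exact zero_le
      have hrσ1 : r ^ ((1:ℝ)/2 * σd) ≤ r ^ σ := by
        apply Real.rpow_le_rpow_of_exponent_ge hrpos hr1
        calc σ ≤ σd/2 := min_le_left _ _
          _ = 1/2 * σd := by ring
      have hrσ2 : r ^ (1/(2*(N:ℝ))) ≤ r ^ σ := by
        exact Real.rpow_le_rpow_of_exponent_ge hrpos hr1 (min_le_right _ _)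
      have hrσpos : 0 < r ^ σ := Real.rpow_pos_of_pos hrpos _
      calc volume S = volume (e.symm ⁻¹' S) := hvol.symm
        _ = ∫⁻ y, volume ((fun t => (t, y)) ⁻¹' (e.symm ⁻¹' S)) := by
            rw [MeasureTheory.Measure.volume_eq_prod]
            exact Measure.prod_apply_symm hmeasT
        _ ≤ ∫⁻ y, (Gset.indicator (fun _ => (1:ℝ≥0∞)) y
              + (Set.Icc (0 : Fin d → ℝ) 1).indicator (fun _ => B) y) :=
            lintegral_mono (fun y => le_trans (hfiber y) (hsplit y))
        _ = volume Gset + B * volume (Set.Icc (0 : Fin d → ℝ) 1) := by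
            rw [lintegral_add_left (measurable_const.indicator hGmeas),
              lintegral_indicator_const hGmeas, lintegral_indicator_const hIccmeas, one_mul]
        _ ≤ ENNReal.ofReal (Cd * r ^ ((1:ℝ)/2 * σd)) + ENNReal.ofReal (C1 * r ^ (1/(2*(N:ℝ)))) := by
            rw [hIccdvol, mul_one]
            exact add_le_add hG (le_refl B)
        _ = ENNReal.ofReal (Cd * r ^ ((1:ℝ)/2 * σd) + C1 * r ^ (1/(2*(N:ℝ)))) := by
            rw [ENNReal.ofReal_add (by positivity) (by positivity)]
        _ ≤ ENNReal.ofReal ((Cd + C1 + 1) * r ^ σ) := by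
            apply ENNReal.ofReal_le_ofReal
            have h1 : Cd * r ^ ((1:ℝ)/2 * σd) ≤ Cd * r ^ σ :=
              mul_le_mul_of_nonneg_left hrσ1 (by linarith)
            have h2 : C1 * r ^ (1/(2*(N:ℝ))) ≤ C1 * r ^ σ :=
              mul_le_mul_of_nonneg_left hrσ2 (by linarith)
            nlinarith


/-- Polynomial sublevel-set estimate: for polynomials `R` on `ℝ^d` of degree at most `N`
with normalized jet at the origin, `|{x ∈ Q : |R(x)| ≤ ε}| ≤ C ε^σ`. -/
theorem stmt4 (d N : ℕ) (hd : 1 ≤ d) (hN : 1 ≤ N) :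
    ∃ σ : ℝ, 0 < σ ∧ ∃ C : ℝ, 0 < C ∧
      ∀ R : MvPolynomial (Fin d) ℝ, R.totalDegree ≤ N →
        1 ≤ ∑ k ∈ Finset.range (N + 1),
            ‖iteratedFDeriv ℝ k (fun x : Fin d → ℝ => MvPolynomial.eval x R) 0‖ →
        ∀ ε : ℝ, 0 < ε →
          volume {x : Fin d → ℝ | x ∈ Set.Icc 0 1 ∧ |MvPolynomial.eval x R| ≤ ε}
            ≤ ENNReal.ofReal (C * ε ^ σ) := by
  obtain ⟨κ, hκ, hjet⟩ := jet_coeff d N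
  obtain ⟨σ, hσ, C, hC, hmain⟩ := mvMain N hN d
  have hκσ : 0 < κ ^ σ := Real.rpow_pos_of_pos hκ σ
  refine ⟨σ, hσ, C / κ ^ σ, by positivity, ?_⟩
  intro R hdeg hj ε hε
  obtain ⟨s, hs⟩ := hjet R hdeg hj
  refine le_trans (hmain R hdeg κ hκ ⟨s, hs⟩ ε hε) ?_
  apply ENNReal.ofReal_le_ofReal
  rw [Real.div_rpow (le_of_lt hε) (le_of_lt hκ)]
  apply le_of_eq
  field_simp
end

section
/- Let I ⊂ ℝ be a bounded interval with center z. Define the lacunary maximal operator N_I f(x) = sup_{r ∈ 2^ℤ} |I|^{−1} ∫_I |f(x − r y)| dy. Then N_I is of weak type (1,1) with constant O(log(2 + |z| / |I|)); that is, there is an absolute constant C such that for all f ∈ L¹(ℝ) and α > 0, |{x : N_I f(x) > α}| ≤ C log(2 + |z|/|I|) α^{−1} ‖f‖_{L¹}. -/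
open MeasureTheory

/-- The lacunary maximal operator `N_I f(x) = sup_{r ∈ 2^ℤ} |I|⁻¹ ∫_I |f(x - r y)| dy`
over the interval `I = (z - L, z + L)` of center `z` and length `2L`. -/
noncomputable def lacMax (z L : ℝ) (f : ℝ → ℝ) (x : ℝ) : ENNReal :=
  ⨆ n : ℤ, (ENNReal.ofReal (2 * L))⁻¹ *
    ∫⁻ y in Set.Ioo (z - L) (z + L), ENNReal.ofReal |f (x - (2 : ℝ) ^ n * y)|

open Set in

lemma lint_cov (g : ℝ → ENNReal) (x c a b : ℝ) (hc : 0 < c) :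
    ∫⁻ y in Set.Ioo a b, g (x - c * y) =
      ENNReal.ofReal c⁻¹ * ∫⁻ u in Set.Ioo (x - c * b) (x - c * a), g u := by
  have hmeq : (fun y : ℝ => x - c * y)
      = (fun u : ℝ => x + u) ∘ (fun u : ℝ => -u) ∘ (fun y : ℝ => c * y) := by
    funext y; simp [sub_eq_add_neg]
  have m1 : Measurable fun y : ℝ => c * y := measurable_const_mul c
  have m2 : Measurable fun u : ℝ => -u := measurable_neg
  have m3 : Measurable fun u : ℝ => x + u := measurable_const_add x
  have hmap : Measure.map (fun y : ℝ => x - c * y) volume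
      = ENNReal.ofReal c⁻¹ • volume := by
    rw [hmeq, ← Measure.map_map m3 (m2.comp m1), ← Measure.map_map m2 m1]
    rw [show (fun y : ℝ => c * y) = (c * ·) from rfl, Real.map_volume_mul_left hc.ne',
      Measure.map_smul, Measure.map_smul]
    congr 1
    · rw [abs_of_pos (inv_pos.2 hc)]
    · rw [show (fun u : ℝ => -u) = Neg.neg from rfl,
        Measure.map_neg_eq_self (volume : Measure ℝ),
        show (fun u : ℝ => x + u) = (x + ·) from rfl, map_add_left_eq_self]
  have hemb : MeasurableEmbedding (fun y : ℝ => x - c * y) := by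
    have he : (fun y : ℝ => x - c * y) = ⇑((Homeomorph.mulLeft₀ c hc.ne').trans
        ((Homeomorph.neg ℝ).trans (Homeomorph.addLeft x))) := by
      funext y
      show x - c * y = x + -(c * y)
      ring
    rw [he]; exact Homeomorph.measurableEmbedding _
  have hmp : MeasurePreserving (fun y : ℝ => x - c * y) volume
      (ENNReal.ofReal c⁻¹ • volume) := ⟨hemb.measurable, hmap⟩
  have hpre : (fun y : ℝ => x - c * y) ⁻¹' Set.Ioo (x - c * b) (x - c * a) = Set.Ioo a b := by
    ext y
    simp only [Set.mem_preimage, Set.mem_Ioo]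
    constructor
    · rintro ⟨h1, h2⟩; constructor <;> nlinarith
    · rintro ⟨h1, h2⟩; constructor <;> nlinarith
  have h := hmp.setLIntegral_comp_preimage_emb hemb g (Set.Ioo (x - c * b) (x - c * a))
  rw [hpre] at h
  rw [h, setLIntegral_smul_measure, smul_eq_mul]

set_option maxHeartbeats 1000000 in
/-- Lemma 3.1, weak type `(1,1)` part: `N_I` is of weak type `(1,1)` with constant
`O(log(2 + |z|/|I|))`. -/
theorem stmt6 :
    ∃ C : ℝ, 0 < C ∧ ∀ z L : ℝ, 0 < L → ∀ f : ℝ → ℝ, Integrable f →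
      ∀ α : ℝ, 0 < α →
        volume {x : ℝ | ENNReal.ofReal α < lacMax z L f x} * ENNReal.ofReal α
          ≤ ENNReal.ofReal (C * Real.log (2 + |z| / (2 * L))) *
              ∫⁻ y, ENNReal.ofReal |f y| := by
  classical
  refine ⟨100, by norm_num, ?_⟩
  intro z L hL f hf α hα
  set g : ℝ → ENNReal := fun u => ENNReal.ofReal |f u| with hg
  set If : ENNReal := ∫⁻ y, g y with hIfdef
  have hIf_ne : If ≠ ⊤ := by
    have h1 : If = ∫⁻ y, ‖f y‖ₑ := by
      simp only [hIfdef, hg, Real.enorm_eq_ofReal_abs]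
    rw [h1]
    exact hf.2.ne
  -- eccentricity parameter m
  set s : ℝ := |z| / L with hs
  have hs0 : 0 ≤ s := div_nonneg (abs_nonneg z) hL.le
  set m : ℕ := 2 * ⌈Real.log (2 + s)⌉₊ with hmdef
  have hlogpos : 0 < Real.log (2 + s) := Real.log_pos (by linarith)
  have hm1 : 1 ≤ m := by
    have : 1 ≤ ⌈Real.log (2 + s)⌉₊ := Nat.one_le_iff_ne_zero.2 (by
      simp only [ne_eq, Nat.ceil_eq_zero, not_le]; exact hlogpos)
    omega
  have hm_pow : 2 + s ≤ (2 : ℝ) ^ (m : ℤ) := by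
    have h1 : Real.log (2 + s) ≤ (⌈Real.log (2 + s)⌉₊ : ℝ) := Nat.le_ceil _
    have hlog2 : (0.6931471803 : ℝ) < Real.log 2 := Real.log_two_gt_d9
    have h2 : 2 + s = Real.exp (Real.log (2 + s)) := (Real.exp_log (by linarith)).symm
    rw [h2]
    have h3 : Real.exp (Real.log (2 + s)) ≤ Real.exp ((m : ℝ) * Real.log 2) := by
      apply Real.exp_le_exp.2
      have : (m : ℝ) = 2 * (⌈Real.log (2 + s)⌉₊ : ℝ) := by push_cast [hmdef]; ring
      nlinarith
    refine h3.trans_eq ?_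
    rw [mul_comm, ← Real.rpow_def_of_pos (by norm_num : (0:ℝ) < 2) (m : ℝ), Real.rpow_natCast,
      zpow_natCast]
  have hm_le : (m : ℝ) ≤ 25 * Real.log (2 + |z| / (2 * L)) := by
    have hceil : (⌈Real.log (2 + s)⌉₊ : ℝ) < Real.log (2 + s) + 1 :=
      Nat.ceil_lt_add_one hlogpos.le
    have hlog2 : (0.6931471803 : ℝ) < Real.log 2 := Real.log_two_gt_d9
    have hlog2' : Real.log 2 ≤ Real.log (2 + s) :=
      Real.log_le_log (by norm_num) (by linarith)
    have hhalf : Real.log (2 + s) ≤ 2 * Real.log (2 + s / 2) := by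
      have h1 : 2 + s ≤ (2 + s / 2) ^ 2 := by nlinarith
      have h2 : Real.log (2 + s) ≤ Real.log ((2 + s / 2) ^ 2) :=
        Real.log_le_log (by linarith) h1
      rwa [Real.log_pow, Nat.cast_ofNat] at h2
    have hzz : |z| / (2 * L) = s / 2 := by rw [hs]; ring
    rw [hzz]
    have : (m : ℝ) = 2 * (⌈Real.log (2 + s)⌉₊ : ℝ) := by push_cast [hmdef]; ring
    nlinarith
  have hmZ : (0 : ℤ) < (m : ℤ) := by exact_mod_cast hm1
  -- basic positivity
  have h2L : (0 : ℝ) < 2 * L := by linarith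
  set α' : ENNReal := ENNReal.ofReal α with hα'
  have hα'0 : α' ≠ 0 := by simp [hα', hα.le, ENNReal.ofReal_eq_zero]; linarith
  -- the intervals
  set J : ℤ → ℝ → Set ℝ :=
    fun n x => Set.Ioo (x - (2:ℝ)^n * (z + L)) (x - (2:ℝ)^n * (z - L)) with hJ
  set ℓ : ℤ → ℝ := fun n => (2:ℝ)^n * (2 * L) with hℓ
  have hc2 : ∀ n : ℤ, (0:ℝ) < (2:ℝ)^n := fun n => zpow_pos (by norm_num) n
  have hℓpos : ∀ n : ℤ, 0 < ℓ n := fun n => by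
    have := hc2 n; simp only [hℓ]; positivity
  set P : ℝ → ℤ → Prop := fun x n =>
    α' < (ENNReal.ofReal (2 * L))⁻¹ *
      ∫⁻ y in Set.Ioo (z - L) (z + L), g (x - (2:ℝ)^n * y) with hP
  set E : Set ℝ := {x : ℝ | ENNReal.ofReal α < lacMax z L f x} with hE
  have hEx : ∀ x ∈ E, ∃ n : ℤ, P x n := by
    intro x hx
    have hx' : α' < ⨆ n : ℤ, (ENNReal.ofReal (2 * L))⁻¹ *
        ∫⁻ y in Set.Ioo (z - L) (z + L), ENNReal.ofReal |f (x - (2:ℝ)^n * y)| := hx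
    exact lt_iSup_iff.mp hx'
  -- the key estimate from change of variables
  have key : ∀ x : ℝ, ∀ n : ℤ, P x n →
      α' * ENNReal.ofReal (ℓ n) ≤ ∫⁻ u in J n x, g u := by
    intro x n hx
    rw [hP] at hx
    rw [lint_cov g x ((2:ℝ)^n) (z - L) (z + L) (hc2 n)] at hx
    set V : ENNReal := ∫⁻ u in Set.Ioo (x - (2:ℝ)^n * (z+L)) (x - (2:ℝ)^n * (z-L)), g u with hV
    show α' * ENNReal.ofReal (ℓ n) ≤ V
    set cn : ℝ := (2:ℝ)^n with hcn
    have hcn0 : (0:ℝ) < cn := hc2 n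
    have ha0 : ENNReal.ofReal (2 * L) ≠ 0 := by
      simp [ENNReal.ofReal_eq_zero, not_le]; linarith
    have hat : ENNReal.ofReal (2 * L) ≠ ⊤ := ENNReal.ofReal_ne_top
    have hb0 : ENNReal.ofReal cn ≠ 0 := by
      simp [ENNReal.ofReal_eq_zero, not_le]; linarith
    have hbt : ENNReal.ofReal cn ≠ ⊤ := ENNReal.ofReal_ne_top
    have hinv : ENNReal.ofReal cn⁻¹ = (ENNReal.ofReal cn)⁻¹ :=
      ENNReal.ofReal_inv_of_pos hcn0
    rw [hinv] at hx
    calc α' * ENNReal.ofReal (ℓ n)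
        = (ENNReal.ofReal cn * ENNReal.ofReal (2*L)) * α' := by
          rw [show ℓ n = cn * (2 * L) from rfl, ENNReal.ofReal_mul hcn0.le]; ring
      _ ≤ (ENNReal.ofReal cn * ENNReal.ofReal (2*L)) *
            ((ENNReal.ofReal (2*L))⁻¹ * ((ENNReal.ofReal cn)⁻¹ * V)) := by
          exact mul_le_mul_right hx.le _
      _ = (ENNReal.ofReal (2*L) * (ENNReal.ofReal (2*L))⁻¹) *
            ((ENNReal.ofReal cn * (ENNReal.ofReal cn)⁻¹) * V) := by ring
      _ = V := by
          rw [ENNReal.mul_inv_cancel ha0 hat, ENNReal.mul_inv_cancel hb0 hbt, one_mul, one_mul]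
  -- bound on the scale
  have hscale : ∀ x : ℝ, ∀ n : ℤ, P x n → ℓ n ≤ α⁻¹ * If.toReal := by
    intro x n hx
    have h1 := key x n hx
    have h2 : (∫⁻ u in J n x, g u) ≤ If := setLIntegral_le_lintegral _ _
    have h3 : ENNReal.ofReal (α * ℓ n) ≤ If := by
      rw [ENNReal.ofReal_mul hα.le]; exact le_trans h1 h2
    have h4 : α * ℓ n ≤ If.toReal :=
      (ENNReal.ofReal_le_iff_le_toReal hIf_ne).mp h3
    calc ℓ n = α⁻¹ * (α * ℓ n) := by field_simp
      _ ≤ α⁻¹ * If.toReal := by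
          apply mul_le_mul_of_nonneg_left h4 (by positivity)
  -- residue classes
  set Er : ℕ → Set ℝ := fun r => {x | ∃ n : ℤ, P x n ∧ n % (m:ℤ) = (r:ℤ)} with hEr
  have hEsub : E ⊆ ⋃ r ∈ Finset.range m, Er r := by
    intro x hx
    obtain ⟨n, hn⟩ := hEx x hx
    have h1 : 0 ≤ n % (m:ℤ) := Int.emod_nonneg n (by omega)
    have h2 : n % (m:ℤ) < (m:ℤ) := Int.emod_lt_of_pos n hmZ
    refine Set.mem_biUnion (Finset.mem_range.2 ?_) (⟨n, hn, ?_⟩ : x ∈ Er (n % (m:ℤ)).toNat)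
    · omega
    · rw [Int.toNat_of_nonneg h1]
  -- the class bound
  have class_bound : ∀ r : ℕ, volume (Er r) * α' ≤ 4 * If := by
    intro r
    set t : Set (ℝ × ℤ) := {p | P p.1 p.2 ∧ p.2 % (m:ℤ) = (r:ℤ)} with ht
    obtain ⟨u, hut, hdisj, hcov⟩ :=
      Vitali.exists_disjoint_subfamily_covering_enlargement
        (fun p : ℝ × ℤ => J p.2 p.1) t (fun p => ℓ p.2) (3/2) (by norm_num)
        (fun p _ => (hℓpos p.2).le) (α⁻¹ * If.toReal)
        (fun p hp => hscale p.1 p.2 hp.1)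
        (fun p _ => Set.nonempty_Ioo.2 (by nlinarith [hc2 p.2]))
    have hcnt : u.Countable :=
      hdisj.countable_of_isOpen (fun p _ => isOpen_Ioo)
        (fun p _ => Set.nonempty_Ioo.2 (by nlinarith [hc2 p.2]))
    -- enlarged sets
    set G : ℝ × ℤ → Set ℝ := fun b =>
      Metric.closedBall b.1 (ℓ b.2) ∪ Metric.closedBall (b.1 - (2:ℝ)^b.2 * z) (ℓ b.2) with hG
    have hzbound : |z| ≤ ((2:ℝ)^(m:ℤ) - 2) * L := by
      have := hm_pow
      have h1 : s ≤ (2:ℝ)^(m:ℤ) - 2 := by linarith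
      rw [hs] at h1
      calc |z| = |z| / L * L := by field_simp
        _ ≤ ((2:ℝ)^(m:ℤ) - 2) * L := by
            apply mul_le_mul_of_nonneg_right h1 hL.le
    have hcover : Er r ⊆ ⋃ b ∈ u, G b := by
      intro x hx
      obtain ⟨n, hPn, hmod⟩ := hx
      have hpt : (x, n) ∈ t := ⟨hPn, hmod⟩
      obtain ⟨b, hbu, hint, hδ⟩ := hcov _ hpt
      set K : ℤ := b.2 with hK
      -- scale comparison: n ≤ K
      have hnK : n ≤ K := by
        by_contra hcon
        push_neg at hcon
        have h1 : K + 1 ≤ n := hcon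
        have h2 : (2:ℝ)^(K+1) ≤ (2:ℝ)^n := zpow_le_zpow_right₀ (by norm_num) h1
        rw [zpow_add_one₀ (by norm_num : (2:ℝ) ≠ 0)] at h2
        have h3 : ℓ n ≤ 3/2 * ℓ K := hδ
        simp only [hℓ] at h3
        nlinarith [hc2 K]
      -- divisibility
      have hdvd : (m:ℤ) ∣ K - n := by
        have hKmod : K % (m:ℤ) = (r:ℤ) := (hut hbu).2
        have : n % (m:ℤ) = K % (m:ℤ) := by rw [hmod, hKmod]
        exact Int.ModEq.dvd this
      obtain ⟨w, hwa, hwb⟩ := hint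
      simp only [hJ, Set.mem_Ioo] at hwa hwb
      rcases eq_or_lt_of_le hnK with heq | hlt
      · -- equal scales
        refine Set.mem_biUnion hbu (Set.mem_union_left _ ?_)
        rw [Metric.mem_closedBall, Real.dist_eq, abs_le]
        rw [heq] at hwa
        have hr : ℓ K = (2:ℝ)^K * (z+L) - (2:ℝ)^K * (z-L) := by
          simp only [hℓ]; ring
        exact ⟨by linarith [hwa.1, hwa.2, hwb.1, hwb.2],
          by linarith [hwa.1, hwa.2, hwb.1, hwb.2]⟩
      · -- separated scales : n + m ≤ K
        have hsep : n + (m:ℤ) ≤ K := by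
          have h0 : 0 < K - n := by omega
          have := Int.le_of_dvd h0 hdvd
          omega
        refine Set.mem_biUnion hbu (Set.mem_union_right _ ?_)
        rw [Metric.mem_closedBall, Real.dist_eq]
        have h2nm : (2:ℝ)^n * (2:ℝ)^(m:ℤ) ≤ (2:ℝ)^K := by
          rw [← zpow_add₀ (by norm_num : (2:ℝ) ≠ 0)]
          exact zpow_le_zpow_right₀ (by norm_num) hsep
        have hxw : |x - w| ≤ (2:ℝ)^n * (|z| + L) := by
          have p1 : (2:ℝ)^n * (z+L) ≤ (2:ℝ)^n * (|z|+L) :=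
            mul_le_mul_of_nonneg_left (by linarith [le_abs_self z]) (hc2 n).le
          have p2 : (2:ℝ)^n * (L-z) ≤ (2:ℝ)^n * (|z|+L) :=
            mul_le_mul_of_nonneg_left (by linarith [neg_abs_le z]) (hc2 n).le
          have e3 : (2:ℝ)^n * (z-L) = -((2:ℝ)^n * (L-z)) := by ring
          rw [abs_le]
          exact ⟨by linarith [hwa.1, hwa.2], by linarith [hwa.1, hwa.2]⟩
        have hwb' : |w - (b.1 - (2:ℝ)^K * z)| ≤ (2:ℝ)^K * L := by
          have e1 : (2:ℝ)^K * (z+L) = (2:ℝ)^K * z + (2:ℝ)^K * L := by ring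
          have e2 : (2:ℝ)^K * (z-L) = (2:ℝ)^K * z - (2:ℝ)^K * L := by ring
          rw [abs_le]
          exact ⟨by linarith [hwb.1, hwb.2], by linarith [hwb.1, hwb.2]⟩
        have hnKz : (2:ℝ)^n * (|z| + L) ≤ (2:ℝ)^K * L := by
          have hq1 : |z| + L ≤ ((2:ℝ)^(m:ℤ) - 1) * L := by linarith [hzbound]
          have hq2 : (2:ℝ)^n * (|z| + L) ≤ (2:ℝ)^n * (((2:ℝ)^(m:ℤ) - 1) * L) :=
            mul_le_mul_of_nonneg_left hq1 (hc2 n).le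
          have hq3 : (2:ℝ)^n * (((2:ℝ)^(m:ℤ) - 1) * L) = ((2:ℝ)^n * (2:ℝ)^(m:ℤ)) * L - (2:ℝ)^n * L := by
            ring
          have hq4 : ((2:ℝ)^n * (2:ℝ)^(m:ℤ)) * L ≤ (2:ℝ)^K * L :=
            mul_le_mul_of_nonneg_right h2nm hL.le
          have hq5 : 0 < (2:ℝ)^n * L := by positivity
          linarith
        calc |x - (b.1 - (2:ℝ)^K * z)|
            ≤ |x - w| + |w - (b.1 - (2:ℝ)^K * z)| := abs_sub_le _ _ _
          _ ≤ (2:ℝ)^n * (|z| + L) + (2:ℝ)^K * L := add_le_add hxw hwb'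
          _ ≤ (2:ℝ)^K * L + (2:ℝ)^K * L := by linarith
          _ = ℓ K := by simp only [hℓ]; ring
    -- measure bound for G
    have hGvol : ∀ b : ℝ × ℤ, volume (G b) ≤ 4 * ENNReal.ofReal (ℓ b.2) := by
      intro b
      calc volume (G b) ≤ volume (Metric.closedBall b.1 (ℓ b.2)) +
            volume (Metric.closedBall (b.1 - (2:ℝ)^b.2 * z) (ℓ b.2)) := measure_union_le _ _
        _ = ENNReal.ofReal (2 * ℓ b.2) + ENNReal.ofReal (2 * ℓ b.2) := by
            rw [Real.volume_closedBall, Real.volume_closedBall]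
        _ = 4 * ENNReal.ofReal (ℓ b.2) := by
            rw [← ENNReal.ofReal_add (by positivity) (by positivity),
              show (4:ENNReal) = ENNReal.ofReal 4 by norm_num,
              ← ENNReal.ofReal_mul (by norm_num)]
            congr 1
            ring
    -- assemble
    haveI := hcnt.to_subtype
    have hdisj' : Pairwise (Function.onFun Disjoint fun b : u => J (b:ℝ×ℤ).2 (b:ℝ×ℤ).1) := by
      intro i j hij
      exact hdisj i.2 j.2 (fun h => hij (Subtype.ext h))
    have hsum : ∑' b : u, ∫⁻ y in J (b:ℝ×ℤ).2 (b:ℝ×ℤ).1, g y ≤ If := by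
      rw [← lintegral_iUnion (fun b => measurableSet_Ioo) hdisj' g]
      exact setLIntegral_le_lintegral _ _
    calc volume (Er r) * α'
        ≤ volume (⋃ b ∈ u, G b) * α' := by
          exact mul_le_mul_left (measure_mono hcover) _
      _ ≤ (∑' b : u, volume (G (b:ℝ×ℤ))) * α' := by
          exact mul_le_mul_left (measure_biUnion_le volume hcnt G) _
      _ ≤ (∑' b : u, 4 * ENNReal.ofReal (ℓ (b:ℝ×ℤ).2)) * α' := by
          exact mul_le_mul_left (ENNReal.tsum_le_tsum (fun b : u => hGvol (b:ℝ×ℤ))) _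
      _ = 4 * ∑' b : u, (α' * ENNReal.ofReal (ℓ (b:ℝ×ℤ).2)) := by
          rw [← ENNReal.tsum_mul_right, ← ENNReal.tsum_mul_left]
          exact tsum_congr fun b => by ring
      _ ≤ 4 * ∑' b : u, ∫⁻ y in J (b:ℝ×ℤ).2 (b:ℝ×ℤ).1, g y := by
          apply mul_le_mul_right
          apply ENNReal.tsum_le_tsum
          intro b
          exact key (b:ℝ×ℤ).1 (b:ℝ×ℤ).2 (hut b.2).1
      _ ≤ 4 * If := mul_le_mul_right hsum _
  -- put everything together
  have hfinal : volume E * α' ≤ (m : ENNReal) * (4 * If) := by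
    calc volume E * α' ≤ volume (⋃ r ∈ Finset.range m, Er r) * α' :=
          mul_le_mul_left (measure_mono hEsub) _
      _ ≤ (∑ r ∈ Finset.range m, volume (Er r)) * α' :=
          mul_le_mul_left (measure_biUnion_finset_le _ _) _
      _ = ∑ r ∈ Finset.range m, volume (Er r) * α' := Finset.sum_mul _ _ _
      _ ≤ ∑ r ∈ Finset.range m, 4 * If := Finset.sum_le_sum fun r _ => class_bound r
      _ = (m : ENNReal) * (4 * If) := by
          rw [Finset.sum_const, Finset.card_range, nsmul_eq_mul]
  refine hfinal.trans ?_
  have hcast : (m : ENNReal) * 4 = ENNReal.ofReal ((m:ℝ) * 4) := by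
    rw [ENNReal.ofReal_mul (by positivity)]
    simp [ENNReal.ofReal_natCast]
  calc (m : ENNReal) * (4 * If) = ((m : ENNReal) * 4) * If := by ring
    _ ≤ ENNReal.ofReal (100 * Real.log (2 + |z| / (2 * L))) * If := by
        apply mul_le_mul_left
        rw [hcast]
        apply ENNReal.ofReal_le_ofReal
        nlinarith [hm_le]
end
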